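/- Let 1 ≤ d < √3 and let Δ(d) be the intersection of the three closed unit balls in ℝ² centered at c₁ = (0,0), c₂ = (d,0), c₃ = (d/2, (√3/2)·d). Then the inradius of Δ(d) equals 1 − d/√3. -/

import Mathlib

open Metric Real MeasureTheory
open scoped InnerProductSpace Pointwise ENNReal

noncomputable section

/-- The Euclidean plane. -/
abbrev E2 := EuclideanSpace ℝ (Fin 2)

/-- The point of the Euclidean plane with the given coordinates. -/
def pt (a b : ℝ) : E2 := (EuclideanSpace.equiv (Fin 2) ℝ).symm ![a, b]

/-- The width of a set `C` in the direction of the unit vector `u`. -/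
def dirWidth (C : Set E2) (u : E2) : ℝ :=
  sSup {w : ℝ | ∃ x ∈ C, ∃ y ∈ C, w = ⟪x - y, u⟫_ℝ}

/-- The minimal width of a set: the infimum of the directional widths over all
unit vectors. -/
def minWidth (C : Set E2) : ℝ :=
  sInf {w : ℝ | ∃ u : E2, ‖u‖ = 1 ∧ w = dirWidth C u}

/-- The inradius of a set. -/
def inradius (C : Set E2) : ℝ :=
  sSup {r : ℝ | 0 ≤ r ∧ ∃ c : E2, closedBall c r ⊆ C}

/-- The circumradius of a set. -/
def circumradius (C : Set E2) : ℝ :=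
  sInf {r : ℝ | 0 ≤ r ∧ ∃ c : E2, C ⊆ closedBall c r}

/-- The dual disk-polygon of a set `D`. -/
def dualDP (D : Set E2) : Set E2 := {y : E2 | ∀ x ∈ D, dist x y ≤ 1}
lemma dist_pt (a b a' b' : ℝ) : dist (pt a b) (pt a' b') = Real.sqrt ((a-a')^2 + (b-b')^2) := by
  rw [EuclideanSpace.dist_eq]
  simp [pt, Fin.sum_univ_two, Real.dist_eq, sq_abs]

lemma norm_pt10 : ‖pt 1 0‖ = 1 := by
  have h := dist_pt 1 0 0 0
  have h0 : pt 0 0 = 0 := by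
    ext i; fin_cases i <;> simp [pt]
  rw [h0, dist_zero_right] at h
  simpa using h

lemma cb_subset_cb {c c' : E2} {r R : ℝ} (hr : 0 ≤ r)
    (h : closedBall c r ⊆ closedBall c' R) : dist c c' + r ≤ R := by
  rcases eq_or_ne c c' with rfl | hne
  · have hp : c + r • pt 1 0 ∈ closedBall c r := by
      simp [mem_closedBall, dist_eq_norm, norm_smul, norm_pt10, abs_of_nonneg hr]
    have := h hp
    rw [mem_closedBall, dist_eq_norm] at this
    simp only [add_sub_cancel_left, norm_smul, norm_pt10, mul_one, Real.norm_eq_abs, abs_of_nonneg hr] at this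
    simpa using this
  · set v := c - c' with hv
    have hvne : v ≠ 0 := sub_ne_zero.2 hne
    have hn : (0:ℝ) < ‖v‖ := norm_pos_iff.2 hvne
    set p := c + (r / ‖v‖) • v with hp
    have hpc : p ∈ closedBall c r := by
      simp only [mem_closedBall, hp, dist_eq_norm, add_sub_cancel_left, norm_smul,
        Real.norm_eq_abs]
      rw [abs_of_nonneg (by positivity)]
      field_simp
      rfl
    have h2 := h hpc
    rw [mem_closedBall, dist_eq_norm] at h2
    have : p - c' = (1 + r / ‖v‖) • v := by
      rw [hp]; rw [add_smul, one_smul]; abel_nf; rw [hv]; ring_nf; abel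
    rw [this, norm_smul, Real.norm_eq_abs, abs_of_nonneg (by positivity)] at h2
    have : dist c c' = ‖v‖ := by rw [dist_eq_norm, hv]
    rw [this]
    have : (1 + r / ‖v‖) * ‖v‖ = ‖v‖ + r := by field_simp
    linarith [h2, this ▸ h2]

lemma dist_pt' (c : E2) (a b : ℝ) :
    dist c (pt a b) = Real.sqrt ((c 0 - a)^2 + (c 1 - b)^2) := by
  rw [EuclideanSpace.dist_eq]
  simp [pt, Fin.sum_univ_two, Real.dist_eq, sq_abs]


/-- The inradius of the regular disk-triangle `Δ(d)` equals `1 - d/√3`. -/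
theorem inradius_disk_triangle (d : ℝ) (hd1 : 1 ≤ d) (hd2 : d < Real.sqrt 3) :
    inradius (closedBall (pt 0 0) 1 ∩ closedBall (pt d 0) 1
        ∩ closedBall (pt (d / 2) (Real.sqrt 3 / 2 * d)) 1)
      = 1 - d / Real.sqrt 3 := by
  set s := Real.sqrt 3 with hsdef
  have hs0 : (0:ℝ) < s := Real.sqrt_pos.2 (by norm_num)
  have hs : s ^ 2 = 3 := Real.sq_sqrt (by norm_num)
  have hd0 : (0:ℝ) < d := lt_of_lt_of_le one_pos hd1
  set r0 := 1 - d / s with hr0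
  have hr0pos : 0 ≤ r0 := by
    rw [hr0, sub_nonneg, div_le_one hs0]; exact hd2.le
  set G : E2 := pt (d/2) (s*d/6) with hG
  have hdistG : ∀ a b : ℝ, (d/2 - a)^2 + (s*d/6 - b)^2 = d^2/3 →
      dist G (pt a b) = d / s := by
    intro a b hab
    rw [hG, dist_pt, hab]
    rw [show d^2/3 = (d/s)^2 by rw [div_pow, hs]]
    exact Real.sqrt_sq (by positivity)
  set S := {r : ℝ | 0 ≤ r ∧ ∃ c : E2, closedBall c r ⊆
      (closedBall (pt 0 0) 1 ∩ closedBall (pt d 0) 1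
        ∩ closedBall (pt (d / 2) (s / 2 * d)) 1)} with hS
  have hmem : r0 ∈ S := by
    refine ⟨hr0pos, G, ?_⟩
    have key : ∀ a b : ℝ, (d/2 - a)^2 + (s*d/6 - b)^2 = d^2/3 →
        closedBall G r0 ⊆ closedBall (pt a b) 1 := by
      intro a b hab
      apply closedBall_subset_closedBall'
      rw [hdistG a b hab, hr0]; linarith
    refine Set.subset_inter (Set.subset_inter (key 0 0 ?_) (key d 0 ?_)) (key (d/2) (s/2*d) ?_)
    · nlinarith [hs]
    · nlinarith [hs]
    · nlinarith [hs]
  have hub : ∀ r ∈ S, r ≤ r0 := by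
    rintro r ⟨hr, c, hc⟩
    have h1 := cb_subset_cb hr (hc.trans (Set.inter_subset_left.trans Set.inter_subset_left))
    have h2 := cb_subset_cb hr (hc.trans (Set.inter_subset_left.trans Set.inter_subset_right))
    have h3 := cb_subset_cb hr (hc.trans Set.inter_subset_right)
    rw [dist_pt'] at h1 h2 h3
    have sq : ∀ A : ℝ, 0 ≤ A → Real.sqrt A + r ≤ 1 → A ≤ (1-r)^2 := by
      intro A hA h
      have h' : Real.sqrt A ≤ 1 - r := by linarith
      calc A = Real.sqrt A ^ 2 := (Real.sq_sqrt hA).symm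
        _ ≤ (1-r)^2 := pow_le_pow_left₀ (Real.sqrt_nonneg _) h' 2
    have e1 := sq _ (by positivity) h1
    have e2 := sq _ (by positivity) h2
    have e3 := sq _ (by positivity) h3
    have h1r : 0 ≤ 1 - r := le_trans (Real.sqrt_nonneg _) (by linarith)
    set x := c 0
    set y := c 1
    have hsum : x^2+y^2 + ((x-d)^2+y^2) + ((x-d/2)^2+(y-s/2*d)^2) ≤ 3*(1-r)^2 := by
      simp only [sub_zero] at e1 e2 e3; linarith
    have hss : (s^2 - 3) * d^2 = 0 := by rw [hs]; ring
    have keysq : d^2 ≤ 3*(1-r)^2 := by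
      nlinarith [sq_nonneg (x - d/2), sq_nonneg (y - s*d/6), hss, hsum]
    have key : d ≤ s * (1 - r) := by
      have h2 : d^2 ≤ (s*(1-r))^2 := by rw [mul_pow, hs]; linarith
      exact (pow_le_pow_iff_left₀ hd0.le (mul_nonneg hs0.le h1r) two_ne_zero).1 h2
    rw [hr0, ← sub_nonneg]
    have : d / s ≤ 1 - r := by rw [div_le_iff₀ hs0, mul_comm]; exact key
    linarith
  exact le_antisymm (csSup_le ⟨r0, hmem⟩ hub) (le_csSup ⟨r0, hub⟩ hmem)
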